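/- arXiv:1409.5410 — 3 statements merged into one kernel-verified Lean document; each statement's English description precedes it below -/
import Mathlib

section
/- Let X be a type, Z ⊆ X a subset, and i, j, n natural numbers with i + j = n. Let W = {w : Fin n → X | the number of indices k with w k ∈ Z equals j}; W is invariant under the action of Σn on (Fin n → X) given by (σ • w) = w ∘ σ⁻¹. Let η : ((Fin i → X \ Z) × (Fin j → Z)) → W be the concatenation map sending (u, v) to the tuple equal to u on the first i coordinates and to v on the last j coordinates (via the standard equivalence Fin i ⊕ Fin j ≅ Fin n). Then for every Σn-set S and every (Σi × Σj)-equivariant map f : ((Fin i → X \ Z) × (Fin j → Z)) → S (where Σi × Σj acts blockwise on the source and acts on S through the block embedding into Σn), there exists a unique Σn-equivariant map f♮ : W → S with f♮ ∘ η = f. Consequently W is Σn-equivariantly isomorphic to the induced Σn-set Ind_{Σi×Σj}^{Σn}(((Fin i → X \ Z)) × (Fin j → Z)). -/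
open Equiv

namespace Stmt0

/-- The standard equivalence `Fin i ⊕ Fin j ≃ Fin n` for `i + j = n`. -/
def finAdd {i j n : ℕ} (h : i + j = n) : Fin i ⊕ Fin j ≃ Fin n :=
  finSumFinEquiv.trans (finCongr h)

/-- The block embedding `Σi × Σj → Σn`: the first factor permutes the first `i`
elements, the second the last `j`. -/
def blockEmb {i j n : ℕ} (h : i + j = n) (p : Perm (Fin i) × Perm (Fin j)) :
    Perm (Fin n) :=
  (finAdd h).permCongr (Equiv.sumCongr p.1 p.2)

/-- The relation `(g, x) ~ (g·φ(h), h⁻¹ • x)` defining the induced `G`-set. -/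
def IndRel {G H P : Type*} [Group G] [Group H] (φ : H → G) (act : H → P → P) :
    G × P → G × P → Prop :=
  fun a b => ∃ h : H, b = (a.1 * φ h, act h⁻¹ a.2)

/-- The induced `G`-set `Ind_H^G P`, a quotient of `G × P`. -/
def Ind {G H P : Type*} [Group G] [Group H] (φ : H → G) (act : H → P → P) : Type _ :=
  Quot (IndRel φ act)

/-- Class of a pair `(g, x)` in the induced `G`-set. -/
def Ind.mk {G H P : Type*} [Group G] [Group H] (φ : H → G) (act : H → P → P)
    (a : G × P) : Ind φ act :=
  Quot.mk _ a

/-- The `G`-action on `Ind_H^G P`, by left multiplication on the first coordinate. -/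
def Ind.smul {G H P : Type*} [Group G] [Group H] {φ : H → G} {act : H → P → P}
    (g : G) : Ind φ act → Ind φ act :=
  Quot.map (fun a => (g * a.1, a.2))
    (by
      rintro ⟨g1, x1⟩ ⟨g2, x2⟩ ⟨h, heq⟩
      refine ⟨h, ?_⟩
      simp only [Prod.ext_iff] at heq ⊢
      exact ⟨by rw [heq.1, mul_assoc], heq.2⟩)

variable {X : Type} (Z : Set X)

/-- The action of `Σn` on `Fin n → X` by `(σ • w) = w ∘ σ⁻¹`. -/
def permSmul {X : Type} {n : ℕ} (σ : Perm (Fin n)) (w : Fin n → X) : Fin n → X :=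
  fun k => w (σ⁻¹ k)

/-- `W`: the tuples for which the number of coordinates lying in `Z` is exactly `j`. -/
def Wset (j n : ℕ) : Set (Fin n → X) :=
  {w | Nat.card {k : Fin n // w k ∈ Z} = j}

/-- `W` is invariant under the `Σn`-action, so the action restricts to `W`. -/
def WAct {j n : ℕ} (σ : Perm (Fin n)) (w : Wset Z j n) : Wset Z j n :=
  ⟨permSmul σ w.1, by
    have hw := w.2
    simp only [Wset, Set.mem_setOf_eq] at hw ⊢
    exact (Nat.card_congr (Equiv.subtypeEquiv (σ⁻¹ : Perm (Fin n)) fun a => Iff.rfl)).trans hw⟩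

/-- The blockwise action of `Σi × Σj` on `(Fin i → X \ Z) × (Fin j → Z)`. -/
def sourceAct {i j : ℕ} (p : Perm (Fin i) × Perm (Fin j))
    (x : (Fin i → ↥(Zᶜ)) × (Fin j → ↥Z)) : (Fin i → ↥(Zᶜ)) × (Fin j → ↥Z) :=
  (fun a => x.1 (p.1⁻¹ a), fun b => x.2 (p.2⁻¹ b))

/-- The concatenation of a tuple in `X \ Z` and a tuple in `Z`, via `Fin i ⊕ Fin j ≃ Fin n`. -/
def concat {i j n : ℕ} (h : i + j = n) (x : (Fin i → ↥(Zᶜ)) × (Fin j → ↥Z)) :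
    Fin n → X :=
  fun k => Sum.elim (fun a => (x.1 a : X)) (fun b => (x.2 b : X)) ((finAdd h).symm k)

lemma concat_mem {i j n : ℕ} (h : i + j = n) (x : (Fin i → ↥(Zᶜ)) × (Fin j → ↥Z)) :
    concat Z h x ∈ Wset Z j n := by
  simp only [Wset, Set.mem_setOf_eq]
  have e1 : {k : Fin n // concat Z h x k ∈ Z} ≃
      {s : Fin i ⊕ Fin j // Sum.elim (fun a => (x.1 a : X)) (fun b => (x.2 b : X)) s ∈ Z} :=
    Equiv.subtypeEquiv (finAdd h).symm fun k => Iff.rfl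
  have e2 : {s : Fin i ⊕ Fin j //
      Sum.elim (fun a => (x.1 a : X)) (fun b => (x.2 b : X)) s ∈ Z} ≃ Fin j :=
    { toFun := fun s => match s with
        | ⟨.inl a, ha⟩ => absurd ha (x.1 a).2
        | ⟨.inr b, _⟩ => b
      invFun := fun b => ⟨.inr b, (x.2 b).2⟩
      left_inv := by rintro ⟨(a | b), hs⟩
                     · exact absurd hs (x.1 a).2
                     · rfl
      right_inv := fun b => rfl }
  rw [Nat.card_congr (e1.trans e2), Nat.card_eq_fintype_card, Fintype.card_fin]

/-- The concatenation map `η` into `W`. -/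
def η {i j n : ℕ} (h : i + j = n) (x : (Fin i → ↥(Zᶜ)) × (Fin j → ↥Z)) : Wset Z j n :=
  ⟨concat Z h x, concat_mem Z h x⟩


section Aux

variable {i j n : ℕ}

lemma permSmul_one {X : Type} {n : ℕ} (w : Fin n → X) : permSmul 1 w = w := by
  funext k; simp [permSmul]

lemma permSmul_mul {X : Type} {n : ℕ} (σ τ : Perm (Fin n)) (w : Fin n → X) :
    permSmul (σ * τ) w = permSmul σ (permSmul τ w) := by
  funext k; simp [permSmul, mul_inv_rev, Perm.mul_apply]

lemma WAct_one (w : Wset Z j n) : WAct Z 1 w = w := Subtype.ext (permSmul_one w.1)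

lemma WAct_mul (σ τ : Perm (Fin n)) (w : Wset Z j n) :
    WAct Z (σ * τ) w = WAct Z σ (WAct Z τ w) :=
  Subtype.ext (permSmul_mul σ τ w.1)

lemma sourceAct_one (x : (Fin i → ↥(Zᶜ)) × (Fin j → ↥Z)) : sourceAct Z 1 x = x := by
  simp [sourceAct]

lemma sourceAct_mul (p q : Perm (Fin i) × Perm (Fin j)) (x : (Fin i → ↥(Zᶜ)) × (Fin j → ↥Z)) :
    sourceAct Z (p * q) x = sourceAct Z p (sourceAct Z q x) := by
  simp [sourceAct, Prod.mul_def, mul_inv_rev, Perm.mul_apply]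

lemma blockEmb_apply (h : i + j = n) (p : Perm (Fin i) × Perm (Fin j)) (s : Fin i ⊕ Fin j) :
    blockEmb h p (finAdd h s) = finAdd h (Equiv.sumCongr p.1 p.2 s) := by
  simp [blockEmb, Equiv.permCongr_apply]

lemma blockEmb_one (h : i + j = n) : blockEmb h 1 = 1 := by
  ext k
  simp [blockEmb, Equiv.permCongr_apply, Prod.fst_one, Prod.snd_one]

lemma blockEmb_mul (h : i + j = n) (p q : Perm (Fin i) × Perm (Fin j)) :
    blockEmb h (p * q) = blockEmb h p * blockEmb h q := by
  ext k
  simp only [blockEmb, Equiv.permCongr_apply, Perm.mul_apply, Equiv.symm_apply_apply,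
    Prod.fst_mul, Prod.snd_mul]
  congr 1
  rcases (finAdd h).symm k with a | b <;> simp [Perm.mul_apply]

lemma blockEmb_inv (h : i + j = n) (p : Perm (Fin i) × Perm (Fin j)) :
    blockEmb h p⁻¹ = (blockEmb h p)⁻¹ := by
  rw [eq_inv_iff_mul_eq_one, ← blockEmb_mul, inv_mul_cancel, blockEmb_one]

lemma concat_mem_Z_iff (h : i + j = n) (x : (Fin i → ↥(Zᶜ)) × (Fin j → ↥Z)) (k : Fin n) :
    concat Z h x k ∈ Z ↔ ((finAdd h).symm k).isRight := by
  simp only [concat]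
  rcases (finAdd h).symm k with a | b
  · exact iff_of_false (x.1 a).2 (by simp)
  · exact iff_of_true (x.2 b).2 (by simp)

lemma concat_injective (h : i + j = n) : Function.Injective (concat Z h) := by
  intro x y hxy
  have key : ∀ s : Fin i ⊕ Fin j,
      Sum.elim (fun a => ((x.1 a : X))) (fun b => ((x.2 b : X))) s =
      Sum.elim (fun a => ((y.1 a : X))) (fun b => ((y.2 b : X))) s := by
    intro s
    have := congrFun hxy (finAdd h s)
    simpa [concat] using this
  ext a
  · exact key (Sum.inl a)
  · exact key (Sum.inr a)

lemma concat_equivariant (h : i + j = n) (p : Perm (Fin i) × Perm (Fin j))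
    (x : (Fin i → ↥(Zᶜ)) × (Fin j → ↥Z)) :
    concat Z h (sourceAct Z p x) = permSmul (blockEmb h p) (concat Z h x) := by
  funext k
  simp only [concat, permSmul, sourceAct]
  have hinv : (blockEmb h p)⁻¹ = blockEmb h p⁻¹ := (blockEmb_inv h p).symm
  rw [hinv]
  have : (finAdd h).symm (blockEmb h p⁻¹ k) =
      Equiv.sumCongr p.1⁻¹ p.2⁻¹ ((finAdd h).symm k) := by
    simp [blockEmb, Equiv.permCongr_apply]
  rw [this]
  rcases (finAdd h).symm k with a | b <;> rfl

lemma η_equivariant (h : i + j = n) (p : Perm (Fin i) × Perm (Fin j))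
    (x : (Fin i → ↥(Zᶜ)) × (Fin j → ↥Z)) :
    η Z h (sourceAct Z p x) = WAct Z (blockEmb h p) (η Z h x) :=
  Subtype.ext (concat_equivariant Z h p x)

lemma exists_decomp (h : i + j = n) (w : Wset Z j n) :
    ∃ (σ : Perm (Fin n)) (x : (Fin i → ↥(Zᶜ)) × (Fin j → ↥Z)), WAct Z σ (η Z h x) = w := by
  classical
  obtain ⟨w, hw⟩ := w
  simp only [Wset, Set.mem_setOf_eq, Nat.card_eq_fintype_card] at hw
  have hcompl : Fintype.card {k : Fin n // ¬ (w k ∈ Z)} = i := by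
    rw [Fintype.card_subtype_compl, hw, Fintype.card_fin]
    omega
  obtain ⟨ei⟩ : Nonempty (Fin i ≃ {k : Fin n // ¬ (w k ∈ Z)}) :=
    ⟨(Fintype.equivFinOfCardEq hcompl).symm⟩
  obtain ⟨ej⟩ : Nonempty (Fin j ≃ {k : Fin n // w k ∈ Z}) :=
    ⟨(Fintype.equivFinOfCardEq hw).symm⟩
  set σ : Perm (Fin n) :=
    (finAdd h).symm.trans (((ei.sumCongr ej).trans (Equiv.sumComm _ _)).trans
      (Equiv.sumCompl (fun k => w k ∈ Z))) with hσ
  have hσl : ∀ a : Fin i, σ (finAdd h (Sum.inl a)) = (ei a : Fin n) := by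
    intro a; simp [hσ]
  have hσr : ∀ b : Fin j, σ (finAdd h (Sum.inr b)) = (ej b : Fin n) := by
    intro b; simp [hσ]
  refine ⟨σ, (fun a => ⟨w (σ (finAdd h (Sum.inl a))), ?_⟩,
              fun b => ⟨w (σ (finAdd h (Sum.inr b))), ?_⟩), ?_⟩
  · rw [hσl]; exact (ei a).2
  · rw [hσr]; exact (ej b).2
  · apply Subtype.ext
    funext k
    show concat Z h _ (σ⁻¹ k) = w k
    simp only [concat]
    rcases hs : (finAdd h).symm (σ⁻¹ k) with a | b
    · simp only [Sum.elim_inl]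
      show w (σ (finAdd h (Sum.inl a))) = w k
      rw [← hs, Equiv.apply_symm_apply]
      simp
    · simp only [Sum.elim_inr]
      show w (σ (finAdd h (Sum.inr b))) = w k
      rw [← hs, Equiv.apply_symm_apply]
      simp

lemma block_decomp (h : i + j = n) (ρ : Perm (Fin n))
    (hρ : ∀ k : Fin n, ((finAdd h).symm (ρ k)).isRight = ((finAdd h).symm k).isRight) :
    ∃ p : Perm (Fin i) × Perm (Fin j), ρ = blockEmb h p := by
  set τ : Perm (Fin i ⊕ Fin j) := (finAdd h).symm.permCongr ρ with hτ
  have hmaps : Set.MapsTo τ (Set.range Sum.inl) (Set.range Sum.inl) := by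
    rintro s ⟨a, rfl⟩
    have h1 : (τ (Sum.inl a)).isRight = ((Sum.inl a : Fin i ⊕ Fin j)).isRight := by
      have := hρ (finAdd h (Sum.inl a))
      simpa [hτ, Equiv.permCongr_apply] using this
    rcases hts : τ (Sum.inl a) with a' | b'
    · exact ⟨a', rfl⟩
    · rw [hts] at h1; simp at h1
  obtain ⟨⟨p1, p2⟩, hp⟩ := Equiv.Perm.mem_sumCongrHom_range_of_perm_mapsTo_inl hmaps
  refine ⟨(p1, p2), ?_⟩
  have : τ = Equiv.sumCongr p1 p2 := by
    rw [← hp]; rfl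
  apply Equiv.ext
  intro k
  have h2 := congrArg (fun (e : Perm (Fin i ⊕ Fin j)) => finAdd h (e ((finAdd h).symm k))) this
  simp only [hτ, Equiv.permCongr_apply, Equiv.symm_symm, Equiv.apply_symm_apply] at h2
  simp only [blockEmb, Equiv.permCongr_apply, Equiv.symm_symm]
  exact h2

lemma glue (h : i + j = n) {S : Type} (smulS : Perm (Fin n) → S → S)
    (h1 : ∀ s, smulS 1 s = s)
    (hmul : ∀ σ τ s, smulS (σ * τ) s = smulS σ (smulS τ s))
    (f : (Fin i → ↥(Zᶜ)) × (Fin j → ↥Z) → S)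
    (hf : ∀ p x, f (sourceAct Z p x) = smulS (blockEmb h p) (f x))
    {σ τ : Perm (Fin n)} {x y : (Fin i → ↥(Zᶜ)) × (Fin j → ↥Z)}
    (heq : permSmul σ (concat Z h x) = permSmul τ (concat Z h y)) :
    smulS σ (f x) = smulS τ (f y) := by
  have hx : concat Z h x = permSmul (σ⁻¹ * τ) (concat Z h y) := by
    rw [permSmul_mul, ← heq, ← permSmul_mul, inv_mul_cancel, permSmul_one]
  set ρ : Perm (Fin n) := σ⁻¹ * τ with hρdef
  have hρ : ∀ k : Fin n, ((finAdd h).symm (ρ⁻¹ k)).isRight = ((finAdd h).symm k).isRight := by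
    intro k
    have h3 : concat Z h x k = concat Z h y (ρ⁻¹ k) := congrFun hx k
    have h4 : (concat Z h x k ∈ Z) ↔ (concat Z h y (ρ⁻¹ k) ∈ Z) := by rw [h3]
    rw [concat_mem_Z_iff, concat_mem_Z_iff] at h4
    exact Bool.coe_iff_coe.mp h4.symm
  obtain ⟨p, hp⟩ := block_decomp h ρ⁻¹ hρ
  have hρ2 : ρ = blockEmb h p⁻¹ := by
    rw [blockEmb_inv, ← hp, inv_inv]
  have hxy : x = sourceAct Z p⁻¹ y := by
    apply concat_injective Z h
    rw [hx, hρ2, concat_equivariant]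
  have : smulS σ (f x) = smulS σ (smulS ρ (f y)) := by
    rw [hxy, hf, hρ2]
  rw [this, ← hmul, hρdef, mul_inv_cancel_left]

end Aux

/-- Universal property: every `Σi × Σj`-equivariant map out of
`(Fin i → X \ Z) × (Fin j → Z)` into a `Σn`-set extends uniquely along `η` to a
`Σn`-equivariant map on `W`; consequently `W ≅ Ind_{Σi×Σj}^{Σn}((Fin i → X\Z) × (Fin j → Z))`
as `Σn`-sets. Moreover `W` is invariant under the `Σn`-action (first conjunct). -/
theorem statement0 {i j n : ℕ} (h : i + j = n) :
    (∀ (σ : Perm (Fin n)) (w : Fin n → X), w ∈ Wset Z j n → permSmul σ w ∈ Wset Z j n) ∧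
    (∀ (S : Type) (smulS : Perm (Fin n) → S → S),
      (∀ s, smulS 1 s = s) →
      (∀ σ τ s, smulS (σ * τ) s = smulS σ (smulS τ s)) →
      ∀ f : (Fin i → ↥(Zᶜ)) × (Fin j → ↥Z) → S,
        (∀ p x, f (sourceAct Z p x) = smulS (blockEmb h p) (f x)) →
        ∃! fn : Wset Z j n → S,
          (∀ σ w, fn (WAct Z σ w) = smulS σ (fn w)) ∧
          (∀ x, fn (η Z h x) = f x)) ∧
    (∃ e : Ind (blockEmb h) (sourceAct (i := i) (j := j) Z) ≃ Wset Z j n,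
      ∀ (σ : Perm (Fin n)) (z), e (Ind.smul σ z) = WAct Z σ (e z)) := by
  classical
  refine ⟨fun σ w hw => (WAct Z σ ⟨w, hw⟩).2, fun S smulS h1 hmul f hf => ?_, ?_⟩
  · -- universal property
    choose σw xw hdecomp using fun w => exists_decomp Z h w
    refine ⟨fun w => smulS (σw w) (f (xw w)), ⟨?_, ?_⟩, ?_⟩
    · intro σ w
      have e1 : permSmul (σw (WAct Z σ w)) (concat Z h (xw (WAct Z σ w))) =
          permSmul (σ * σw w) (concat Z h (xw w)) := by
        have h2 := congrArg Subtype.val (hdecomp (WAct Z σ w))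
        have h3 := congrArg Subtype.val (hdecomp w)
        rw [permSmul_mul]
        calc permSmul (σw (WAct Z σ w)) (concat Z h (xw (WAct Z σ w)))
            = (WAct Z σ w).1 := h2
          _ = permSmul σ (w : Fin n → X) := rfl
          _ = permSmul σ (permSmul (σw w) (concat Z h (xw w))) :=
              congrArg (permSmul σ) h3.symm
      have := glue Z h smulS h1 hmul f hf e1
      show smulS (σw (WAct Z σ w)) (f (xw (WAct Z σ w))) = smulS σ (smulS (σw w) (f (xw w)))
      rw [this, hmul]
    · intro x
      have e1 : permSmul (σw (η Z h x)) (concat Z h (xw (η Z h x))) =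
          permSmul 1 (concat Z h x) := by
        have h2 := congrArg Subtype.val (hdecomp (η Z h x))
        rw [permSmul_one]
        exact h2
      have := glue Z h smulS h1 hmul f hf e1
      show smulS (σw (η Z h x)) (f (xw (η Z h x))) = f x
      rw [this, h1]
    · intro g ⟨hg1, hg2⟩
      funext w
      have := hdecomp w
      calc g w = g (WAct Z (σw w) (η Z h (xw w))) := by rw [this]
        _ = smulS (σw w) (g (η Z h (xw w))) := hg1 _ _
        _ = smulS (σw w) (f (xw w)) := by rw [hg2]
  · -- the equivalence with the induced set
    have smul_mk : ∀ (g : Perm (Fin n)) (a : Perm (Fin n) × ((Fin i → ↥(Zᶜ)) × (Fin j → ↥Z))),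
        Ind.smul g (Ind.mk (blockEmb h) (sourceAct Z) a) =
          Ind.mk (blockEmb h) (sourceAct Z) (g * a.1, a.2) := fun g a => rfl
    have ind_one : ∀ z : Ind (blockEmb h) (sourceAct (i := i) (j := j) Z),
        Ind.smul 1 z = z := by
      intro z
      induction z using Quot.ind with
      | _ a => show Ind.mk _ _ (1 * a.1, a.2) = Ind.mk _ _ a
               rw [one_mul]
    have ind_mul : ∀ (σ τ : Perm (Fin n)) (z : Ind (blockEmb h) (sourceAct (i := i) (j := j) Z)),
        Ind.smul (σ * τ) z = Ind.smul σ (Ind.smul τ z) := by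
      intro σ τ z
      induction z using Quot.ind with
      | _ a => show Ind.mk _ _ (σ * τ * a.1, a.2) = Ind.mk _ _ (σ * (τ * a.1), a.2)
               rw [mul_assoc]
    have f0_equiv : ∀ (p : Perm (Fin i) × Perm (Fin j)) (x : (Fin i → ↥(Zᶜ)) × (Fin j → ↥Z)),
        Ind.mk (blockEmb h) (sourceAct Z) (1, sourceAct Z p x) =
          Ind.smul (blockEmb h p) (Ind.mk (blockEmb h) (sourceAct Z) (1, x)) := by
      intro p x
      rw [smul_mk]
      refine (Quot.sound ⟨p⁻¹, ?_⟩).symm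
      simp only [Prod.mk.injEq]
      constructor
      · rw [mul_one, ← blockEmb_mul, mul_inv_cancel, blockEmb_one]
      · rw [inv_inv]
    obtain ⟨fn, ⟨hfn1, hfn2⟩, hfnu⟩ :=
      (show ∃! fn : Wset Z j n → Ind (blockEmb h) (sourceAct (i := i) (j := j) Z),
          (∀ σ w, fn (WAct Z σ w) = Ind.smul σ (fn w)) ∧
          (∀ x, fn (η Z h x) = Ind.mk (blockEmb h) (sourceAct Z) (1, x)) from by
        choose σw xw hdecomp using fun w => exists_decomp Z h w
        refine ⟨fun w => Ind.smul (σw w) (Ind.mk _ _ (1, xw w)), ⟨?_, ?_⟩, ?_⟩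
        · intro σ w
          have e1 : permSmul (σw (WAct Z σ w)) (concat Z h (xw (WAct Z σ w))) =
              permSmul (σ * σw w) (concat Z h (xw w)) := by
            have h2 := congrArg Subtype.val (hdecomp (WAct Z σ w))
            have h3 := congrArg Subtype.val (hdecomp w)
            rw [permSmul_mul]
            calc permSmul (σw (WAct Z σ w)) (concat Z h (xw (WAct Z σ w)))
                = (WAct Z σ w).1 := h2
              _ = permSmul σ (w : Fin n → X) := rfl
              _ = permSmul σ (permSmul (σw w) (concat Z h (xw w))) :=
                  congrArg (permSmul σ) h3.symm
          have := glue Z h Ind.smul ind_one ind_mul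
            (fun x => Ind.mk (blockEmb h) (sourceAct Z) (1, x))
            (fun p x => f0_equiv p x) e1
          show Ind.smul (σw (WAct Z σ w)) (Ind.mk (blockEmb h) (sourceAct Z) (1, xw (WAct Z σ w))) =
            Ind.smul σ (Ind.smul (σw w) (Ind.mk (blockEmb h) (sourceAct Z) (1, xw w)))
          rw [this, ind_mul]
        · intro x
          have e1 : permSmul (σw (η Z h x)) (concat Z h (xw (η Z h x))) =
              permSmul 1 (concat Z h x) := by
            have h2 := congrArg Subtype.val (hdecomp (η Z h x))
            rw [permSmul_one]
            exact h2
          have := glue Z h Ind.smul ind_one ind_mul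
            (fun x => Ind.mk (blockEmb h) (sourceAct Z) (1, x))
            (fun p x => f0_equiv p x) e1
          show Ind.smul (σw (η Z h x)) (Ind.mk (blockEmb h) (sourceAct Z) (1, xw (η Z h x))) =
            Ind.mk (blockEmb h) (sourceAct Z) (1, x)
          rw [this, ind_one]
        · intro g ⟨hg1, hg2⟩
          funext w
          calc g w = g (WAct Z (σw w) (η Z h (xw w))) := by rw [hdecomp w]
            _ = Ind.smul (σw w) (g (η Z h (xw w))) := hg1 _ _
            _ = Ind.smul (σw w) (Ind.mk _ _ (1, xw w)) := by rw [hg2])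
    -- forward map from Ind to Wset
    have esound : ∀ a b : Perm (Fin n) × ((Fin i → ↥(Zᶜ)) × (Fin j → ↥Z)),
        IndRel (blockEmb h) (sourceAct Z) a b →
          WAct Z a.1 (η Z h a.2) = WAct Z b.1 (η Z h b.2) := by
      rintro ⟨g, x⟩ ⟨g', x'⟩ ⟨p, hp⟩
      obtain ⟨hp1, hp2⟩ := Prod.mk.injEq .. ▸ hp
      subst hp1
      rw [hp2, η_equivariant, ← WAct_mul, mul_assoc, ← blockEmb_mul, mul_inv_cancel,
        blockEmb_one, mul_one]
    set eto : Ind (blockEmb h) (sourceAct (i := i) (j := j) Z) → Wset Z j n :=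
      Quot.lift (fun a => WAct Z a.1 (η Z h a.2)) esound with heto
    have eto_mk : ∀ a, eto (Ind.mk (blockEmb h) (sourceAct Z) a) = WAct Z a.1 (η Z h a.2) :=
      fun a => rfl
    have eto_equiv : ∀ (σ : Perm (Fin n)) z, eto (Ind.smul σ z) = WAct Z σ (eto z) := by
      intro σ z
      induction z using Quot.ind with
      | _ a =>
        show WAct Z (σ * a.1) (η Z h a.2) = WAct Z σ (WAct Z a.1 (η Z h a.2))
        rw [WAct_mul]
    have left : ∀ z, fn (eto z) = z := by
      intro z
      induction z using Quot.ind with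
      | _ a =>
        show fn (WAct Z a.1 (η Z h a.2)) = Ind.mk _ _ a
        rw [hfn1, hfn2, smul_mk, mul_one]
    have right : ∀ w, eto (fn w) = w := by
      have huniq := (exists_decomp Z h : ∀ w : Wset Z j n, _)
      choose σw xw hdecomp using huniq
      intro w
      calc eto (fn w) = eto (fn (WAct Z (σw w) (η Z h (xw w)))) := by rw [hdecomp w]
        _ = WAct Z (σw w) (eto (fn (η Z h (xw w)))) := by rw [hfn1, eto_equiv]
        _ = WAct Z (σw w) (η Z h (xw w)) := by rw [hfn2, eto_mk, WAct_one]
        _ = w := hdecomp w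
    exact ⟨⟨eto, fn, left, right⟩, eto_equiv⟩

end Stmt0
end

section
/- Let i' ≤ i ≤ n be natural numbers and set j = n − i. Regard Ω_{≤i'}(Fin i), the poset of nonempty subsets of Fin i of cardinality at most i' ordered by inclusion, as a (Σi × Σj)-poset with the first factor acting elementwise and the second acting trivially, and let Ω_{≤i',i}(Fin n) be the Σn-poset of flags (U, V) of subsets of Fin n with ∅ ≠ U ⊆ V, |U| ≤ i', |V| = i, ordered by componentwise inclusion. Let η : Ω_{≤i'}(Fin i) → Ω_{≤i',i}(Fin n) send U to the flag (ι(U), ι(Fin i)), where ι : Fin i ↪ Fin n is the inclusion of the first i elements. Then for every partial order Q equipped with an order-preserving Σn-action and every (Σi × Σj)-equivariant order-preserving map f : Ω_{≤i'}(Fin i) → Q (with Σi × Σj acting on Q through the block embedding into Σn), there exists a unique Σn-equivariant order-preserving map f♮ : Ω_{≤i',i}(Fin n) → Q with f♮ ∘ η = f. -/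
open Equiv

namespace Stmt4

/-- The standard equivalence `Fin i ⊕ Fin j ≃ Fin n` for `i + j = n`. -/
def finAdd {i j n : ℕ} (h : i + j = n) : Fin i ⊕ Fin j ≃ Fin n :=
  finSumFinEquiv.trans (finCongr h)

/-- The block embedding `Σi × Σj → Σn`. -/
def blockEmb {i j n : ℕ} (h : i + j = n) (p : Perm (Fin i) × Perm (Fin j)) :
    Perm (Fin n) :=
  (finAdd h).permCongr (Equiv.sumCongr p.1 p.2)

/-- The inclusion `Fin i ↪ Fin n` of the first `i` elements, via `Fin i ⊕ Fin j ≃ Fin n`. -/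
def ι {i j n : ℕ} (h : i + j = n) : Fin i → Fin n := fun a => finAdd h (Sum.inl a)

/-- `Ω_{≤m}(α)`: nonempty subsets of `α` of cardinality at most `m`, ordered by
inclusion. -/
def Omega (m : ℕ) (α : Type*) : Type _ :=
  {U : Finset α // U.Nonempty ∧ U.card ≤ m}

/-- The `(Σi × Σj)`-action on `Ω_{≤i'}(Fin i)`: the first factor acts elementwise and
the second factor acts trivially. -/
def omegaAct {i' i j : ℕ} (p : Perm (Fin i) × Perm (Fin j)) (U : Omega i' (Fin i)) :
    Omega i' (Fin i) :=
  ⟨U.val.image p.1, U.2.1.image p.1, Finset.card_image_le.trans U.2.2⟩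

/-- `Ω_{≤i',i}(Fin n)`: flags `(U, V)` of subsets of `Fin n` with `∅ ≠ U ⊆ V`,
`|U| ≤ i'`, `|V| = i`, ordered by componentwise inclusion. -/
def Flag (i' i n : ℕ) : Type _ :=
  {UV : Finset (Fin n) × Finset (Fin n) //
    UV.1.Nonempty ∧ UV.1 ⊆ UV.2 ∧ UV.1.card ≤ i' ∧ UV.2.card = i}

/-- The elementwise `Σn`-action on flags. -/
def flagAct {i' i n : ℕ} (σ : Perm (Fin n)) (F : Flag i' i n) : Flag i' i n :=
  ⟨(F.val.1.image σ, F.val.2.image σ),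
    F.2.1.image σ,
    Finset.image_subset_image F.2.2.1,
    Finset.card_image_le.trans F.2.2.2.1,
    (Finset.card_image_of_injective _ σ.injective).trans F.2.2.2.2⟩

/-- The map `η` sending `U ⊆ Fin i` to the flag `(ι(U), ι(Fin i))` in `Ω_{≤i',i}(Fin n)`. -/
def ηflag {i' i j n : ℕ} (hij : i + j = n) (U : Omega i' (Fin i)) : Flag i' i n :=
  ⟨(U.val.image (ι hij), Finset.univ.image (ι hij)),
    U.2.1.image _,
    Finset.image_subset_image (Finset.subset_univ _),
    Finset.card_image_le.trans U.2.2,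
    by
      have hinj : Function.Injective (ι (i := i) (j := j) hij) := fun a b hab =>
        Sum.inl_injective ((finAdd hij).injective hab)
      rw [Finset.card_image_of_injective _ hinj]
      simp⟩

section Aux

variable {i' i j n : ℕ}

lemma ι_injective (hij : i + j = n) : Function.Injective (ι (i := i) (j := j) hij) :=
  fun a b hab => Sum.inl_injective ((finAdd hij).injective hab)

/-- The standard block: image of `Fin i` in `Fin n`. -/
def V0 (hij : i + j = n) : Finset (Fin n) := Finset.univ.image (ι hij)

lemma mem_V0 {hij : i + j = n} {x : Fin n} : x ∈ V0 hij ↔ ∃ a, ι hij a = x := by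
  simp [V0]

lemma card_V0 (hij : i + j = n) : (V0 hij).card = i := by
  rw [V0, Finset.card_image_of_injective _ (ι_injective hij)]
  simp

lemma blockEmb_apply_ι (hij : i + j = n) (p : Perm (Fin i) × Perm (Fin j)) (a : Fin i) :
    blockEmb hij p (ι hij a) = ι hij (p.1 a) := by
  simp [blockEmb, ι, Equiv.permCongr_apply]

lemma blockEmb_mul (hij : i + j = n) (p q : Perm (Fin i) × Perm (Fin j)) :
    blockEmb hij (p * q) = blockEmb hij p * blockEmb hij q := by
  ext x
  simp only [blockEmb, Equiv.permCongr_apply, Perm.mul_apply, Equiv.symm_apply_apply]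
  rcases hx : (finAdd hij).symm x with a | b <;> simp [Perm.mul_apply]

lemma blockEmb_one (hij : i + j = n) : blockEmb hij 1 = 1 := by
  ext x
  simp [blockEmb, Equiv.permCongr_apply]

/-- Every permutation stabilizing the standard block is a block permutation. -/
lemma exists_block (hij : i + j = n) (σ : Perm (Fin n))
    (hσ : ∀ a : Fin i, σ (ι hij a) ∈ V0 hij) :
    ∃ p : Perm (Fin i) × Perm (Fin j), σ = blockEmb hij p := by
  classical
  set e := finAdd hij with he
  have hmt : Set.MapsTo (e.symm.permCongr σ) (Set.range Sum.inl) (Set.range Sum.inl) := by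
    rintro x ⟨a, rfl⟩
    obtain ⟨b, hb⟩ := mem_V0.mp (hσ a)
    refine ⟨b, ?_⟩
    simp only [Equiv.permCongr_apply, Equiv.symm_symm]
    rw [show e (Sum.inl a) = ι hij a from rfl, ← hb]
    simp [ι, he]
  obtain ⟨p, hp⟩ := Perm.mem_sumCongrHom_range_of_perm_mapsTo_inl hmt
  refine ⟨p, ?_⟩
  refine Equiv.ext fun x => ?_
  have := congrArg (fun q => q (e.symm x)) hp
  simp only [Perm.sumCongrHom_apply, Equiv.permCongr_apply, Equiv.symm_symm] at this
  have h2 := congrArg e this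
  simpa [blockEmb, Equiv.permCongr_apply] using h2.symm

lemma compl_card {hij : i + j = n} {V : Finset (Fin n)} (hV : V.card = i) : Vᶜ.card = j := by
  rw [Finset.card_compl, hV, Fintype.card_fin]
  omega

/-- A permutation of `Fin n` carrying the standard block onto `V`. -/
noncomputable def sigmaV (hij : i + j = n) (V : Finset (Fin n)) (hV : V.card = i) :
    Perm (Fin n) :=
  (finAdd hij).symm.trans
    ((Equiv.sumCongr ((finCongr hV.symm).trans V.equivFin.symm)
      (((finCongr (compl_card (hij := hij) hV).symm).trans Vᶜ.equivFin.symm).trans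
        (Equiv.subtypeEquivRight fun x => Finset.mem_compl))).trans
      (Equiv.sumCompl (· ∈ V)))

lemma sigmaV_mem {hij : i + j = n} {V : Finset (Fin n)} (hV : V.card = i) (a : Fin i) :
    sigmaV hij V hV (ι hij a) ∈ V := by
  simp only [sigmaV, ι, Equiv.trans_apply, Equiv.symm_apply_apply, Equiv.sumCongr_apply,
    Sum.map_inl, Equiv.sumCompl_apply_inl]
  exact Finset.coe_mem _

lemma sigmaV_image {hij : i + j = n} {V : Finset (Fin n)} (hV : V.card = i) :
    (V0 hij).image (sigmaV hij V hV) = V := by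
  apply Finset.eq_of_subset_of_card_le
  · intro x hx
    obtain ⟨y, hy, rfl⟩ := Finset.mem_image.mp hx
    obtain ⟨a, rfl⟩ := mem_V0.mp hy
    exact sigmaV_mem hV a
  · rw [Finset.card_image_of_injective _ (sigmaV hij V hV).injective, card_V0, hV]

lemma sigmaV_inv_mem {hij : i + j = n} {V : Finset (Fin n)} (hV : V.card = i)
    {x : Fin n} (hx : x ∈ V) : (sigmaV hij V hV)⁻¹ x ∈ V0 hij := by
  rw [← sigmaV_image (hij := hij) hV] at hx
  obtain ⟨y, hy, rfl⟩ := Finset.mem_image.mp hx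
  simpa using hy

/-- Pull back a subset of `Fin n` along `σ ∘ ι`. -/
def pullF (hij : i + j = n) (σ : Perm (Fin n)) (U : Finset (Fin n)) : Finset (Fin i) :=
  Finset.univ.filter (fun a => σ (ι hij a) ∈ U)

lemma mem_pullF {hij : i + j = n} {σ : Perm (Fin n)} {U : Finset (Fin n)} {a : Fin i} :
    a ∈ pullF hij σ U ↔ σ (ι hij a) ∈ U := by
  simp [pullF]

lemma image_pullF {hij : i + j = n} {σ : Perm (Fin n)} {U : Finset (Fin n)}
    (hU : U ⊆ (V0 hij).image σ) :
    (pullF hij σ U).image (fun a => σ (ι hij a)) = U := by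
  ext x
  simp only [Finset.mem_image, mem_pullF]
  constructor
  · rintro ⟨a, ha, rfl⟩; exact ha
  · intro hx
    obtain ⟨y, hy, rfl⟩ := Finset.mem_image.mp (hU hx)
    obtain ⟨a, rfl⟩ := mem_V0.mp hy
    exact ⟨a, hx, rfl⟩

lemma pullF_card {hij : i + j = n} {σ : Perm (Fin n)} {U : Finset (Fin n)}
    (hU : U ⊆ (V0 hij).image σ) : (pullF hij σ U).card = U.card := by
  conv_rhs => rw [← image_pullF hU]
  rw [Finset.card_image_of_injective]
  exact fun a b hab => ι_injective hij (σ.injective hab)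

lemma pullF_nonempty {hij : i + j = n} {σ : Perm (Fin n)} {U : Finset (Fin n)}
    (hU : U ⊆ (V0 hij).image σ) (hne : U.Nonempty) : (pullF hij σ U).Nonempty := by
  rw [← image_pullF hU] at hne
  exact Finset.Nonempty.of_image hne

lemma flag_sub {F : Flag i' i n} (hij : i + j = n) :
    F.val.1 ⊆ (V0 hij).image (sigmaV hij F.val.2 F.2.2.2.2) := by
  rw [sigmaV_image]
  exact F.2.2.1

/-- Pulling a flag back to an element of `Ω_{≤i'}(Fin i)`. -/
noncomputable def pullOmega (hij : i + j = n) (F : Flag i' i n) : Omega i' (Fin i) :=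
  ⟨pullF hij (sigmaV hij F.val.2 F.2.2.2.2) F.val.1,
    pullF_nonempty (flag_sub hij) F.2.1,
    (pullF_card (flag_sub hij)).le.trans F.2.2.2.1⟩

lemma flag_decomp (hij : i + j = n) (F : Flag i' i n) :
    flagAct (sigmaV hij F.val.2 F.2.2.2.2) (ηflag hij (pullOmega hij F)) = F := by
  apply Subtype.ext
  apply Prod.ext
  · show (((pullOmega hij F).val.image (ι hij)).image _) = F.val.1
    rw [Finset.image_image]
    exact image_pullF (flag_sub hij)
  · show ((Finset.univ.image (ι hij)).image _) = F.val.2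
    exact sigmaV_image _

end Aux

/-- Universal property of `Ω_{≤i',i}(Fin n)`: every `(Σi × Σj)`-equivariant
order-preserving map `f` from `Ω_{≤i'}(Fin i)` to a `Σn`-poset `Q` extends uniquely
along `η` to a `Σn`-equivariant order-preserving map `f♮` on `Ω_{≤i',i}(Fin n)`. -/
theorem statement4 (i' i j n : ℕ) (h1 : i' ≤ i) (hij : i + j = n)
    (Q : Type) [PartialOrder Q] (smulQ : Perm (Fin n) → Q → Q)
    (hQ1 : ∀ q, smulQ 1 q = q)
    (hQ2 : ∀ σ τ q, smulQ (σ * τ) q = smulQ σ (smulQ τ q))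
    (hQmono : ∀ σ, Monotone (smulQ σ))
    (f : Omega i' (Fin i) → Q)
    (hfmono : ∀ U V : Omega i' (Fin i), U.val ⊆ V.val → f U ≤ f V)
    (hfequi : ∀ (p : Perm (Fin i) × Perm (Fin j)) (U : Omega i' (Fin i)),
      f (omegaAct p U) = smulQ (blockEmb hij p) (f U)) :
    ∃! fn : Flag i' i n → Q,
      (∀ a b : Flag i' i n, a.val.1 ⊆ b.val.1 → a.val.2 ⊆ b.val.2 → fn a ≤ fn b) ∧
      (∀ (σ : Perm (Fin n)) (a : Flag i' i n), fn (flagAct σ a) = smulQ σ (fn a)) ∧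
      (∀ U : Omega i' (Fin i), fn (ηflag hij U) = f U) := by
  classical
  refine ⟨fun F => smulQ (sigmaV hij F.val.2 F.2.2.2.2) (f (pullOmega hij F)),
    ⟨?_, ?_, ?_⟩, ?_⟩
  · -- monotonicity
    rintro ⟨⟨Ua, Va⟩, ha⟩ ⟨⟨Ub, Vb⟩, hb⟩ hU hV
    simp only at hU hV ⊢
    have hVV : Va = Vb :=
      Finset.eq_of_subset_of_card_le hV (by rw [ha.2.2.2, hb.2.2.2])
    subst hVV
    apply hQmono
    apply hfmono
    intro a haU
    unfold pullOmega
    unfold pullOmega at haU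
    simp only [mem_pullF] at haU ⊢
    exact hU haU
  · -- equivariance
    intro τ F
    set V := F.val.2 with hVdef
    set σ := sigmaV hij F.val.2 F.2.2.2.2 with hσdef
    set σ' := sigmaV hij (flagAct τ F).val.2 (flagAct τ F).2.2.2.2 with hσ'def
    have hσ'V : ∀ x ∈ V.image τ, σ'⁻¹ x ∈ V0 hij := fun x hx =>
      sigmaV_inv_mem _ hx
    obtain ⟨p, hp⟩ : ∃ p, σ'⁻¹ * (τ * σ) = blockEmb hij p := by
      apply exists_block
      intro a
      apply hσ'V
      simp only [Perm.mul_apply]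
      exact Finset.mem_image_of_mem τ (sigmaV_mem _ a)
    have hkey : ∀ x, σ' (blockEmb hij p x) = τ (σ x) := by
      intro x
      rw [← hp]
      simp [Perm.mul_apply]
    have hpull : pullOmega hij (flagAct τ F) = omegaAct p (pullOmega hij F) := by
      apply Subtype.ext
      show pullF hij σ' ((flagAct τ F).val.1) = (pullF hij σ F.val.1).image p.1
      ext a
      simp only [mem_pullF, Finset.mem_image, flagAct]
      constructor
      · intro hx
        refine ⟨p.1⁻¹ a, ?_, by simp⟩
        have hs : σ' (ι hij a) = τ (σ (ι hij (p.1⁻¹ a))) := by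
          rw [← hkey, blockEmb_apply_ι]
          simp
        obtain ⟨u, hu, huu⟩ := hx
        rw [hs] at huu
        rwa [← τ.injective huu]
      · rintro ⟨b, hb, rfl⟩
        have hs : σ' (ι hij (p.1 b)) = τ (σ (ι hij b)) := by
          rw [← hkey, blockEmb_apply_ι]
        exact ⟨σ (ι hij b), hb, hs.symm⟩
    show smulQ σ' (f (pullOmega hij (flagAct τ F))) = smulQ τ (smulQ σ (f (pullOmega hij F)))
    rw [hpull, hfequi, ← hQ2, ← hp]
    rw [show σ' * (σ'⁻¹ * (τ * σ)) = τ * σ by group, hQ2]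
  · -- compatibility with η
    intro U
    have hV0 : (ηflag hij U).val.2 = V0 hij := rfl
    set σ₀ := sigmaV hij (ηflag hij U).val.2 (ηflag hij U).2.2.2.2 with hσ₀def
    obtain ⟨p, hp⟩ : ∃ p, σ₀ = blockEmb hij p := by
      apply exists_block
      intro a
      exact sigmaV_mem _ a
    have hpull : pullOmega hij (ηflag hij U) = omegaAct p⁻¹ U := by
      apply Subtype.ext
      show pullF hij σ₀ ((ηflag hij U).val.1) = U.val.image (p⁻¹).1
      ext a
      simp only [mem_pullF, Finset.mem_image, ηflag, hp, blockEmb_apply_ι]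
      constructor
      · rintro ⟨b, hb, hbb⟩
        refine ⟨b, hb, ?_⟩
        rw [ι_injective hij hbb]
        simp
      · rintro ⟨b, hb, rfl⟩
        exact ⟨b, hb, by simp⟩
    show smulQ σ₀ (f (pullOmega hij (ηflag hij U))) = f U
    rw [hpull, hfequi, hp, ← hQ2, ← blockEmb_mul]
    simp only [mul_inv_cancel]
    rw [blockEmb_one, hQ1]
  · -- uniqueness
    intro fn' ⟨hmono', hequi', hη'⟩
    funext F
    conv_lhs => rw [← flag_decomp hij F]
    rw [hequi', hη']

end Stmt4
end

section
/- Let 1 ≤ i ≤ n and j be natural numbers, and let Σn = Equiv.Perm (Fin n). Let Ω_{≤i,i}(Fin n) be the Σn-poset of flags (U, V) of subsets of Fin n with ∅ ≠ U ⊆ V, |U| ≤ i, |V| = i, ordered by componentwise inclusion, and let Ω_{≤i}(Fin n) be the Σn-poset of nonempty subsets of Fin n of cardinality at most i, ordered by inclusion. Then the map sending a j-chain (U_0, V_0) < (U_1, V_1) < ⋯ < (U_j, V_j) to the j-chain U_0 < U_1 < ⋯ < U_j is a Σn-equivariant bijection from the set of j-chains in Ω_{≤i,i}(Fin n) whose maximal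 element (U_j, V_j) satisfies U_j = V_j onto the set of j-chains in Ω_{≤i}(Fin n) whose maximal element U_j has cardinality exactly i. -/
open Equiv

namespace Stmt6

/-- `Ω_{≤m}(α)`: nonempty subsets of `α` of cardinality at most `m`, ordered by
inclusion. -/
def Omega (m : ℕ) (α : Type*) : Type _ :=
  {U : Finset α // U.Nonempty ∧ U.card ≤ m}

/-- The ordering on `Ω_{≤m}(Fin n)`: inclusion. -/
def omLe {m : ℕ} {α : Type*} (U V : Omega m α) : Prop := U.val ⊆ V.val

/-- The strict ordering on `Ω_{≤m}(Fin n)`. -/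
def omLt {m : ℕ} {α : Type*} (U V : Omega m α) : Prop := omLe U V ∧ U ≠ V

/-- The elementwise `Σn`-action on `Ω_{≤m}(Fin n)`. -/
def omegaAct {m n : ℕ} (σ : Perm (Fin n)) (U : Omega m (Fin n)) : Omega m (Fin n) :=
  ⟨U.val.image σ, U.2.1.image σ, Finset.card_image_le.trans U.2.2⟩

/-- `Ω_{≤i',i}(Fin n)`: flags `(U, V)` of subsets of `Fin n` with `∅ ≠ U ⊆ V`,
`|U| ≤ i'`, `|V| = i`, ordered by componentwise inclusion. -/
def Flag (i' i n : ℕ) : Type _ :=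
  {UV : Finset (Fin n) × Finset (Fin n) //
    UV.1.Nonempty ∧ UV.1 ⊆ UV.2 ∧ UV.1.card ≤ i' ∧ UV.2.card = i}

/-- The ordering on flags: componentwise inclusion. -/
def flagLe {i' i n : ℕ} (a b : Flag i' i n) : Prop :=
  a.val.1 ⊆ b.val.1 ∧ a.val.2 ⊆ b.val.2

/-- The strict ordering on flags. -/
def flagLt {i' i n : ℕ} (a b : Flag i' i n) : Prop := flagLe a b ∧ a ≠ b

/-- The elementwise `Σn`-action on flags. -/
def flagAct {i' i n : ℕ} (σ : Perm (Fin n)) (F : Flag i' i n) : Flag i' i n :=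
  ⟨(F.val.1.image σ, F.val.2.image σ),
    F.2.1.image σ,
    Finset.image_subset_image F.2.2.1,
    Finset.card_image_le.trans F.2.2.2.1,
    (Finset.card_image_of_injective _ σ.injective).trans F.2.2.2.2⟩

lemma flagAct_injective {i' i n : ℕ} (σ : Perm (Fin n)) :
    Function.Injective (flagAct (i' := i') (i := i) σ) := by
  intro a b hab
  have h1 := congrArg (fun F : Flag i' i n => F.val.1) hab
  have h2 := congrArg (fun F : Flag i' i n => F.val.2) hab
  exact Subtype.ext (Prod.ext_iff.mpr
    ⟨Finset.image_injective σ.injective h1, Finset.image_injective σ.injective h2⟩)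

lemma omegaAct_injective {m n : ℕ} (σ : Perm (Fin n)) :
    Function.Injective (omegaAct (m := m) σ) := by
  intro a b hab
  exact Subtype.ext (Finset.image_injective σ.injective (congrArg Subtype.val hab))

/-- `j`-chains in `Ω_{≤i,i}(Fin n)` whose maximal element `(U_j, V_j)` satisfies
`U_j = V_j`. -/
def DChains (i j n : ℕ) : Type _ :=
  {c : Fin (j + 1) → Flag i i n //
    (∀ k l, k < l → flagLt (c k) (c l)) ∧
    (c (Fin.last j)).val.1 = (c (Fin.last j)).val.2}

/-- `j`-chains in `Ω_{≤i}(Fin n)` whose maximal element has cardinality exactly `i`. -/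
def CChains (i j n : ℕ) : Type _ :=
  {c : Fin (j + 1) → Omega i (Fin n) //
    (∀ k l, k < l → omLt (c k) (c l)) ∧
    (c (Fin.last j)).val.card = i}

/-- The entrywise `Σn`-action on `DChains`. -/
def dAct {i j n : ℕ} (σ : Perm (Fin n)) (c : DChains i j n) : DChains i j n :=
  ⟨fun k => flagAct σ (c.val k), by
    constructor
    · intro k l hkl
      obtain ⟨⟨hle1, hle2⟩, hne⟩ := c.2.1 k l hkl
      exact ⟨⟨Finset.image_subset_image hle1, Finset.image_subset_image hle2⟩,
        fun hc => hne (flagAct_injective σ hc)⟩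
    · exact congrArg (Finset.image σ) c.2.2⟩

/-- The entrywise `Σn`-action on `CChains`. -/
def cAct {i j n : ℕ} (σ : Perm (Fin n)) (c : CChains i j n) : CChains i j n :=
  ⟨fun k => omegaAct σ (c.val k), by
    constructor
    · intro k l hkl
      obtain ⟨hle, hne⟩ := c.2.1 k l hkl
      exact ⟨Finset.image_subset_image hle, fun hc => hne (omegaAct_injective σ hc)⟩
    · exact (Finset.card_image_of_injective _ σ.injective).trans c.2.2⟩

lemma dchain_snd_const {i j n : ℕ} (c : DChains i j n) (k : Fin (j + 1)) :
    (c.val k).val.2 = (c.val (Fin.last j)).val.2 := by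
  rcases eq_or_lt_of_le (Fin.le_last k) with h | h
  · rw [h]
  · obtain ⟨⟨_, hle⟩, _⟩ := c.2.1 k (Fin.last j) h
    exact Finset.eq_of_subset_of_card_le hle
      (by rw [(c.val k).2.2.2.2, (c.val (Fin.last j)).2.2.2.2])

/-- Forward map: drop the second component. -/
def fwd {i j n : ℕ} (c : DChains i j n) : CChains i j n :=
  ⟨fun k => ⟨(c.val k).val.1, (c.val k).2.1, (c.val k).2.2.2.1⟩, by
    refine ⟨fun k l hkl => ?_, ?_⟩
    · obtain ⟨⟨h1, _⟩, hne⟩ := c.2.1 k l hkl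
      refine ⟨h1, fun hc => hne ?_⟩
      have hU : (c.val k).val.1 = (c.val l).val.1 := congrArg Subtype.val hc
      have hV : (c.val k).val.2 = (c.val l).val.2 :=
        (dchain_snd_const c k).trans (dchain_snd_const c l).symm
      exact Subtype.ext (Prod.ext_iff.mpr ⟨hU, hV⟩)
    · show (c.val (Fin.last j)).val.1.card = i
      rw [c.2.2]; exact (c.val (Fin.last j)).2.2.2.2⟩

/-- Backward map: pair with the constant top element. -/
def bwd {i j n : ℕ} (c : CChains i j n) : DChains i j n :=
  ⟨fun k => ⟨((c.val k).val, (c.val (Fin.last j)).val), (c.val k).2.1, by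
      rcases eq_or_lt_of_le (Fin.le_last k) with h | h
      · rw [h]
      · exact (c.2.1 k (Fin.last j) h).1,
      (c.val k).2.2, c.2.2⟩, by
    refine ⟨fun k l hkl => ?_, rfl⟩
    obtain ⟨h1, hne⟩ := c.2.1 k l hkl
    refine ⟨⟨h1, subset_rfl⟩, fun hc => hne ?_⟩
    exact Subtype.ext (congrArg (fun F => F.1) (congrArg Subtype.val hc))⟩

/-- Forgetting the (constant) second components of a `j`-chain of flags whose maximal
element satisfies `U_j = V_j` gives a `Σn`-equivariant bijection onto the `j`-chains in
`Ω_{≤i}(Fin n)` whose maximal element has cardinality exactly `i`. -/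
theorem statement6 (i j n : ℕ) (h0 : 1 ≤ i) (h2 : i ≤ n) :
    ∃ e : DChains i j n ≃ CChains i j n,
      (∀ (σ : Perm (Fin n)) (c : DChains i j n), e (dAct σ c) = cAct σ (e c)) ∧
      (∀ (c : DChains i j n) (k : Fin (j + 1)), ((e c).val k).val = (c.val k).val.1) := by
  refine ⟨⟨fwd, bwd, fun c => ?_, fun c => ?_⟩, fun σ c => ?_, fun c k => rfl⟩
  · apply Subtype.ext; funext k
    apply Subtype.ext
    refine Prod.ext_iff.mpr ⟨rfl, ?_⟩
    show (c.val (Fin.last j)).val.1 = (c.val k).val.2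
    rw [c.2.2]
    exact (dchain_snd_const c k).symm
  · apply Subtype.ext; funext k
    exact Subtype.ext rfl
  · apply Subtype.ext; funext k
    exact Subtype.ext rfl

end Stmt6
end
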